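/- Let m, n ≥ 1, A, A' ∈ ℂ^{m×m}, B, B' ∈ ℂ^{n×n}, and C, C' ∈ ℂ^{m×n}. The system of matrix equations AX − YB = C and A'X − YB' = C' admits a unique solution (X, Y) ∈ ℂ^{m×n} × ℂ^{m×n} if and only if the pencils A − λA' and B − λB' are regular with disjoint spectra (including the eigenvalue at infinity); equivalently, if and only if for every pair (μ, ν) ∈ ℂ² with (μ, ν) ≠ (0, 0), det(μA − νA') and det(μB − νB') do not both vanish. -/

import Mathlib

open scoped Matrix

namespace SylvesterStewartAux

open Matrix Polynomial

noncomputable section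

variable {k l : ℕ}

lemma det_map_eval (M : Matrix (Fin k) (Fin k) (Polynomial ℂ)) (r : ℂ) :
    M.det.eval r = (M.map (eval r)).det := by
  have h := RingHom.map_det (evalRingHom r) M
  simpa [coe_evalRingHom] using h

lemma eval_charpoly' (M : Matrix (Fin k) (Fin k) ℂ) (r : ℂ) :
    M.charpoly.eval r = (r • (1 : Matrix (Fin k) (Fin k) ℂ) - M).det := by
  rw [Matrix.charpoly, det_map_eval]
  congr 1
  ext i j
  by_cases h : i = j <;>
    simp [charmatrix_apply, h, Matrix.one_apply, Matrix.diagonal_apply]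

def pencil (M M' : Matrix (Fin k) (Fin k) ℂ) : Polynomial ℂ :=
  (M.map C - (X : Polynomial ℂ) • M'.map C).det

lemma pencil_eval (M M' : Matrix (Fin k) (Fin k) ℂ) (t : ℂ) :
    (pencil M M').eval t = (M - t • M').det := by
  rw [pencil, det_map_eval]
  congr 1
  ext i j
  simp only [Matrix.map_apply, Matrix.sub_apply, Matrix.smul_apply, smul_eq_mul, eval_sub,
    eval_mul, eval_X, eval_C]

def pencilRev (M M' : Matrix (Fin k) (Fin k) ℂ) : Polynomial ℂ :=
  ((X : Polynomial ℂ) • M.map C - M'.map C).det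

lemma pencilRev_eval (M M' : Matrix (Fin k) (Fin k) ℂ) (s : ℂ) :
    (pencilRev M M').eval s = (s • M - M').det := by
  rw [pencilRev, det_map_eval]
  congr 1
  ext i j
  simp only [Matrix.map_apply, Matrix.sub_apply, Matrix.smul_apply, smul_eq_mul, eval_sub,
    eval_mul, eval_X, eval_C]

lemma pencil_ne_zero (hl : 1 ≤ l)
    (A A' : Matrix (Fin k) (Fin k) ℂ) (B B' : Matrix (Fin l) (Fin l) ℂ)
    (H : ∀ μ ν : ℂ, (μ, ν) ≠ (0, 0) →
      ¬((μ • A - ν • A').det = 0 ∧ (μ • B - ν • B').det = 0)) :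
    pencil A A' ≠ 0 := by
  intro h0
  have hAall : ∀ t : ℂ, (A - t • A').det = 0 := by
    intro t; rw [← pencil_eval, h0, eval_zero]
  have hARev : ∀ s : ℂ, (s • A - A').det = 0 := by
    have hq : pencilRev A A' = 0 := by
      apply Polynomial.eq_zero_of_infinite_isRoot
      apply Set.Infinite.mono (s := ({(0 : ℂ)}ᶜ : Set ℂ))
      · intro s hs
        have hs' : s ≠ 0 := hs
        show Polynomial.IsRoot _ s
        rw [Polynomial.IsRoot, pencilRev_eval]
        have hrw : s • A - A' = s • (A - s⁻¹ • A') := by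
          rw [smul_sub, smul_smul, mul_inv_cancel₀ hs', one_smul]
        rw [hrw, Matrix.det_smul, hAall, mul_zero]
      · exact (Set.finite_singleton (0 : ℂ)).infinite_compl
    intro s
    rw [← pencilRev_eval, hq, eval_zero]
  have hA1 : ∀ μ ν : ℂ, (μ • A - ν • A').det = 0 := by
    intro μ ν
    rcases eq_or_ne μ 0 with hμ | hμ
    · have hrw : μ • A - ν • A' = ν • ((0 : ℂ) • A - A') := by
        rw [hμ]; module
      rw [hrw, Matrix.det_smul, hARev, mul_zero]
    · have hμν : μ * (ν / μ) = ν := by field_simp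
      have hrw : μ • A - ν • A' = μ • (A - (ν / μ) • A') := by
        rw [smul_sub, smul_smul, hμν]
      rw [hrw, Matrix.det_smul, hAall, mul_zero]
  have hBne : ∀ μ ν : ℂ, (μ, ν) ≠ (0, 0) → (μ • B - ν • B').det ≠ 0 :=
    fun μ ν h hd => H μ ν h ⟨hA1 μ ν, hd⟩
  have hpBno : ∀ t : ℂ, (pencil B B').eval t ≠ 0 := by
    intro t
    rw [pencil_eval]
    have := hBne 1 t (by simp)
    simpa using this
  have hdeg : (pencil B B').degree = 0 := by
    by_contra hdeg
    obtain ⟨x, hx⟩ := IsAlgClosed.exists_root (pencil B B') hdeg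
    exact hpBno x hx
  set c : ℂ := (pencil B B').coeff 0 with hc
  have hpBc : pencil B B' = C c := Polynomial.eq_C_of_degree_le_zero (le_of_eq hdeg)
  have hqB : pencilRev B B' = C c * X ^ l := by
    apply Polynomial.eq_of_infinite_eval_eq
    apply Set.Infinite.mono (s := ({(0 : ℂ)}ᶜ : Set ℂ))
    · intro s hs
      have hs' : s ≠ 0 := hs
      show (pencilRev B B').eval s = _
      rw [pencilRev_eval, eval_mul, eval_pow, eval_C, eval_X]
      have hrw : s • B - B' = s • (B - s⁻¹ • B') := by
        rw [smul_sub, smul_smul, mul_inv_cancel₀ hs', one_smul]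
      rw [hrw, Matrix.det_smul]
      have hcc : (B - s⁻¹ • B').det = c := by
        rw [← pencil_eval, hpBc, eval_C]
      rw [hcc]
      simp [Fintype.card_fin, mul_comm]
    · exact (Set.finite_singleton (0 : ℂ)).infinite_compl
  have hB'0 : ((0 : ℂ) • B - (1 : ℂ) • B').det = 0 := by
    have h1 : ((0 : ℂ) • B - B').det = (pencilRev B B').eval 0 := (pencilRev_eval B B' 0).symm
    have h2 : (pencilRev B B').eval 0 = 0 := by
      rw [hqB]
      simp [zero_pow (Nat.one_le_iff_ne_zero.mp hl)]
    rw [one_smul, h1, h2]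
  exact hBne 0 1 (by simp) hB'0

lemma pow_intertwine {P : Matrix (Fin k) (Fin k) ℂ} {Q : Matrix (Fin l) (Fin l) ℂ}
    {Y : Matrix (Fin k) (Fin l) ℂ} (h : P * Y = Y * Q) (j : ℕ) :
    P ^ j * Y = Y * Q ^ j := by
  induction j with
  | zero => simp
  | succ i ih =>
      rw [pow_succ, pow_succ, Matrix.mul_assoc, h, ← Matrix.mul_assoc, ih, Matrix.mul_assoc]

lemma aeval_intertwine {P : Matrix (Fin k) (Fin k) ℂ} {Q : Matrix (Fin l) (Fin l) ℂ}
    {Y : Matrix (Fin k) (Fin l) ℂ} (h : P * Y = Y * Q) (p : Polynomial ℂ) :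
    (aeval P p) * Y = Y * (aeval Q p) := by
  induction p using Polynomial.induction_on' with
  | add p q hp hq => rw [map_add, map_add, Matrix.add_mul, Matrix.mul_add, hp, hq]
  | monomial i a =>
      simp only [aeval_monomial, Algebra.algebraMap_eq_smul_one, smul_mul_assoc, one_mul,
        Matrix.mul_smul, Matrix.smul_mul]
      rw [pow_intertwine h]

lemma det_aeval_charpoly_ne_zero (P : Matrix (Fin k) (Fin k) ℂ) (Q : Matrix (Fin l) (Fin l) ℂ)
    (h : ∀ a : ℂ, P.charpoly.eval a = 0 → (a • (1 : Matrix (Fin l) (Fin l) ℂ) - Q).det ≠ 0) :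
    (aeval Q P.charpoly).det ≠ 0 := by
  have hmon := P.charpoly_monic
  have hsplit : Splits P.charpoly := IsAlgClosed.splits P.charpoly
  set L := P.charpoly.roots.toList with hLdef
  have hLP : P.charpoly = (L.map fun a => X - C a).prod := by
    conv_lhs => rw [hsplit.eq_prod_roots_of_monic hmon]
    rw [← Multiset.coe_toList P.charpoly.roots, Multiset.map_coe, Multiset.prod_coe]
  rw [hLP, map_list_prod, ← Matrix.coe_detMonoidHom, map_list_prod]
  apply List.prod_ne_zero
  rw [List.mem_map]
  rintro ⟨q, hq, hdq⟩
  rw [List.map_map, List.mem_map] at hq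
  obtain ⟨a, ha, rfl⟩ := hq
  have haroot : P.charpoly.eval a = 0 := by
    have ha' : a ∈ P.charpoly.roots := by
      rwa [← Multiset.mem_toList]
    exact (Polynomial.mem_roots hmon.ne_zero).mp ha'
  have h1 : aeval Q (X - C a) = Q - a • (1 : Matrix (Fin l) (Fin l) ℂ) := by
    rw [map_sub, aeval_X, aeval_C, Algebra.algebraMap_eq_smul_one]
  have h2 : Q - a • (1 : Matrix (Fin l) (Fin l) ℂ) =
      -(a • (1 : Matrix (Fin l) (Fin l) ℂ) - Q) := (neg_sub _ _).symm
  simp only [Function.comp_apply, Matrix.coe_detMonoidHom, h1, h2, Matrix.det_neg] at hdq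
  exact (mul_ne_zero (pow_ne_zero _ (by norm_num : (-1 : ℂ) ≠ 0)) (h a haroot)) hdq

lemma key_left (μ ν : ℂ) (y : Fin l → ℂ) (x : Fin k → ℂ) (A A' : Matrix (Fin k) (Fin k) ℂ)
    (hx : x ᵥ* (μ • A - ν • A') = 0) :
    (μ • vecMulVec y x) * A + ((-ν) • vecMulVec y x) * A' = 0 := by
  ext i j
  have hxj := congrFun hx j
  simp only [Matrix.vecMul, dotProduct, Matrix.sub_apply, Matrix.smul_apply, smul_eq_mul,
    Pi.zero_apply] at hxj
  simp only [Matrix.add_apply, Matrix.mul_apply, Matrix.smul_apply, Matrix.vecMulVec_apply,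
    smul_eq_mul, Matrix.zero_apply]
  rw [← Finset.sum_add_distrib]
  have hterm : ∀ t, μ * (y i * x t) * A t j + -ν * (y i * x t) * A' t j =
      y i * (x t * (μ * A t j - ν * A' t j)) := fun t => by ring
  rw [Finset.sum_congr rfl fun t _ => hterm t, ← Finset.mul_sum, hxj, mul_zero]

lemma key_right (μ ν : ℂ) (y : Fin l → ℂ) (x : Fin k → ℂ) (B B' : Matrix (Fin l) (Fin l) ℂ)
    (hy : (μ • B - ν • B') *ᵥ y = 0) :
    B * (μ • vecMulVec y x) + B' * ((-ν) • vecMulVec y x) = 0 := by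
  ext i j
  have hyi := congrFun hy i
  simp only [Matrix.mulVec, dotProduct, Matrix.sub_apply, Matrix.smul_apply, smul_eq_mul,
    Pi.zero_apply] at hyi
  simp only [Matrix.add_apply, Matrix.mul_apply, Matrix.smul_apply, Matrix.vecMulVec_apply,
    smul_eq_mul, Matrix.zero_apply]
  rw [← Finset.sum_add_distrib]
  have hterm : ∀ t, B i t * (μ * (y t * x j)) + B' i t * (-ν * (y t * x j)) =
      ((μ * B i t - ν * B' i t) * y t) * x j := fun t => by ring
  rw [Finset.sum_congr rfl fun t _ => hterm t, ← Finset.sum_mul, hyi, zero_mul]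

lemma trace_vecMulVec_mul_conjTranspose (y : Fin l → ℂ) (x : Fin k → ℂ) :
    Matrix.trace (vecMulVec y x * (vecMulVec y x)ᴴ) = (y ⬝ᵥ star y) * (x ⬝ᵥ star x) := by
  simp only [Matrix.trace, Matrix.diag, Matrix.mul_apply, Matrix.conjTranspose_apply,
    Matrix.vecMulVec_apply, dotProduct, star_mul', Pi.star_apply]
  rw [Finset.sum_mul_sum]
  exact Finset.sum_congr rfl fun i _ => Finset.sum_congr rfl fun j _ => by ring

open scoped ComplexOrder in
lemma dotProduct_self_star_ne_zero {v : Fin k → ℂ} (hv : v ≠ 0) : v ⬝ᵥ star v ≠ 0 :=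
  fun h => hv (dotProduct_self_star_eq_zero.mp h)

/-- The linear map underlying the system of the two Sylvester-type equations. -/
def sylT (A A' : Matrix (Fin k) (Fin k) ℂ) (B B' : Matrix (Fin l) (Fin l) ℂ) :
    (Matrix (Fin k) (Fin l) ℂ × Matrix (Fin k) (Fin l) ℂ) →ₗ[ℂ]
      (Matrix (Fin k) (Fin l) ℂ × Matrix (Fin k) (Fin l) ℂ) where
  toFun p := (A * p.1 - p.2 * B, A' * p.1 - p.2 * B')
  map_add' p q := by
    refine Prod.ext ?_ ?_ <;> dsimp <;> rw [Matrix.mul_add, Matrix.add_mul] <;> abel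
  map_smul' c p := by
    refine Prod.ext ?_ ?_ <;> dsimp <;>
      rw [Matrix.mul_smul, Matrix.smul_mul, smul_sub]

@[simp] lemma sylT_apply (A A' : Matrix (Fin k) (Fin k) ℂ) (B B' : Matrix (Fin l) (Fin l) ℂ)
    (p : Matrix (Fin k) (Fin l) ℂ × Matrix (Fin k) (Fin l) ℂ) :
    sylT A A' B B' p = (A * p.1 - p.2 * B, A' * p.1 - p.2 * B') := rfl

end

end SylvesterStewartAux

open SylvesterStewartAux Matrix Polynomial in
/-- Stewart: the system of matrix equations `A X − Y B = C`,
`A' X − Y B' = C'` admits a unique solution `(X, Y)` if and only if the pencils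
`A − λ A'` and `B − λ B'` are regular with disjoint spectra (including infinity);
in homogeneous coordinates: for every `(μ, ν) ≠ (0, 0)`, `det (μ A − ν A')` and
`det (μ B − ν B')` do not both vanish. -/
theorem sylvester_system_unique_solution_iff
    (m n : ℕ) (hm : 1 ≤ m) (hn : 1 ≤ n)
    (A A' : Matrix (Fin m) (Fin m) ℂ) (B B' : Matrix (Fin n) (Fin n) ℂ)
    (C C' : Matrix (Fin m) (Fin n) ℂ) :
    (∃! p : Matrix (Fin m) (Fin n) ℂ × Matrix (Fin m) (Fin n) ℂ,
        A * p.1 - p.2 * B = C ∧ A' * p.1 - p.2 * B' = C') ↔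
    ∀ μ ν : ℂ, (μ, ν) ≠ (0, 0) →
      ¬ ((μ • A - ν • A').det = 0 ∧ (μ • B - ν • B').det = 0) := by
  classical
  set T := sylT A A' B B' with hT
  have hmem : ∀ p : Matrix (Fin m) (Fin n) ℂ × Matrix (Fin m) (Fin n) ℂ,
      (A * p.1 - p.2 * B = C ∧ A' * p.1 - p.2 * B' = C') ↔ T p = (C, C') := by
    intro p
    rw [hT, sylT_apply, Prod.ext_iff]
  rw [existsUnique_congr hmem]
  have hbridge : (∃! p, T p = (C, C')) ↔ Function.Injective T := by
    constructor
    · rintro ⟨p, hp, hu⟩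
      rw [← LinearMap.ker_eq_bot, LinearMap.ker_eq_bot']
      intro q hq
      have h1 : T (q + p) = (C, C') := by rw [map_add, hq, zero_add, hp]
      have h2 := hu _ h1
      exact add_eq_right.mp h2
    · intro hinj
      obtain ⟨p, hp⟩ := (LinearMap.injective_iff_surjective.mp hinj) (C, C')
      exact ⟨p, hp, fun q hq => hinj (hq.trans hp.symm)⟩
  rw [hbridge]
  constructor
  · -- injectivity implies the homogeneous pencil condition
    rintro hinj μ ν hpair ⟨hdA, hdB⟩
    obtain ⟨x, hx0, hx⟩ := Matrix.exists_vecMul_eq_zero_iff.mpr hdA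
    obtain ⟨y, hy0, hy⟩ := Matrix.exists_mulVec_eq_zero_iff.mpr hdB
    set W := vecMulVec y x with hW
    set U := μ • W with hU
    set V := (-ν) • W with hV
    have key1 : U * A + V * A' = 0 := key_left μ ν y x A A' hx
    have key2 : B * U + B' * V = 0 := key_right μ ν y x B B' hy
    obtain ⟨p, hp⟩ := LinearMap.injective_iff_surjective.mp hinj (Uᴴ, Vᴴ)
    rw [hT, sylT_apply, Prod.ext_iff] at hp
    obtain ⟨hp1, hp2⟩ := hp
    dsimp at hp1 hp2
    have htr : trace (U * Uᴴ) + trace (V * Vᴴ) = 0 := by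
      rw [← hp1, ← hp2, Matrix.mul_sub, Matrix.mul_sub, trace_sub, trace_sub]
      have e1 : trace (U * (A * p.1)) + trace (V * (A' * p.1)) = 0 := by
        rw [← trace_add, ← Matrix.mul_assoc, ← Matrix.mul_assoc, ← Matrix.add_mul, key1,
          Matrix.zero_mul, trace_zero]
      have e2 : trace (U * (p.2 * B)) + trace (V * (p.2 * B')) = 0 := by
        have c1 : trace (U * (p.2 * B)) = trace ((B * U) * p.2) := by
          rw [trace_mul_comm U (p.2 * B), Matrix.mul_assoc, trace_mul_comm p.2 (B * U)]
        have c2 : trace (V * (p.2 * B')) = trace ((B' * V) * p.2) := by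
          rw [trace_mul_comm V (p.2 * B'), Matrix.mul_assoc, trace_mul_comm p.2 (B' * V)]
        rw [c1, c2, ← trace_add, ← Matrix.add_mul, key2, Matrix.zero_mul, trace_zero]
      linear_combination e1 - e2
    have hUU : U * Uᴴ = (μ * star μ) • (W * Wᴴ) := by
      rw [hU, Matrix.conjTranspose_smul, Matrix.smul_mul, Matrix.mul_smul, smul_smul]
    have hVV : V * Vᴴ = (ν * star ν) • (W * Wᴴ) := by
      rw [hV, Matrix.conjTranspose_smul, Matrix.smul_mul, Matrix.mul_smul, smul_smul,
        star_neg, neg_mul_neg]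
    have hWW : trace (W * Wᴴ) = (y ⬝ᵥ star y) * (x ⬝ᵥ star x) :=
      trace_vecMulVec_mul_conjTranspose y x
    rw [hUU, hVV, trace_smul, trace_smul, hWW, smul_eq_mul, smul_eq_mul] at htr
    have hfac : (μ * star μ + ν * star ν) * ((y ⬝ᵥ star y) * (x ⬝ᵥ star x)) = 0 := by
      rw [add_mul]; exact htr
    have h1 : (y ⬝ᵥ star y) ≠ 0 := dotProduct_self_star_ne_zero hy0
    have h2 : (x ⬝ᵥ star x) ≠ 0 := dotProduct_self_star_ne_zero hx0
    have h3 : μ * star μ + ν * star ν ≠ 0 := by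
      intro h
      have hcast : (↑(Complex.normSq μ) : ℂ) + ↑(Complex.normSq ν) = 0 := by
        rw [← Complex.mul_conj, ← Complex.mul_conj]
        simpa [Complex.star_def] using h
      have hre : Complex.normSq μ + Complex.normSq ν = 0 := by exact_mod_cast hcast
      have hboth := (add_eq_zero_iff_of_nonneg (Complex.normSq_nonneg μ)
        (Complex.normSq_nonneg ν)).mp hre
      exact hpair (by
        rw [Complex.normSq_eq_zero.mp hboth.1, Complex.normSq_eq_zero.mp hboth.2])
    exact (mul_ne_zero h3 (mul_ne_zero h1 h2)) hfac
  · -- the pencil condition implies injectivity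
    intro H
    rw [← LinearMap.ker_eq_bot, LinearMap.ker_eq_bot']
    intro p hp0
    rw [hT, sylT_apply, Prod.ext_iff] at hp0
    obtain ⟨h1, h2⟩ := hp0
    dsimp at h1 h2
    rw [sub_eq_zero] at h1 h2
    have hApen : pencil A A' ≠ 0 := pencil_ne_zero hn A A' B B' H
    have hBpen : pencil B B' ≠ 0 :=
      pencil_ne_zero hm B B' A A' (fun μ ν hpr hc => H μ ν hpr ⟨hc.2, hc.1⟩)
    have hfin : ({t : ℂ | (pencil A A').IsRoot t} ∪ {t : ℂ | (pencil B B').IsRoot t}).Finite :=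
      (Polynomial.finite_setOf_isRoot hApen).union (Polynomial.finite_setOf_isRoot hBpen)
    obtain ⟨t, ht⟩ := hfin.infinite_compl.nonempty
    rw [Set.mem_compl_iff, Set.mem_union] at ht
    push_neg at ht
    have hAt : (A - t • A').det ≠ 0 := by rw [← pencil_eval]; exact ht.1
    have hBt : (B - t • B').det ≠ 0 := by rw [← pencil_eval]; exact ht.2
    set At := A - t • A' with hAtdef
    set Bt := B - t • B' with hBtdef
    have hAu : IsUnit At.det := isUnit_iff_ne_zero.mpr hAt
    have hBu : IsUnit Bt.det := isUnit_iff_ne_zero.mpr hBt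
    have hAinv : At⁻¹.det ≠ 0 := by
      intro hz
      have h8 : At.det * At⁻¹.det = 1 := by
        rw [← Matrix.det_mul, Matrix.mul_nonsing_inv _ hAu, Matrix.det_one]
      rw [hz, mul_zero] at h8
      exact zero_ne_one h8
    have hBinv : Bt⁻¹.det ≠ 0 := by
      intro hz
      have h8 : Bt.det * Bt⁻¹.det = 1 := by
        rw [← Matrix.det_mul, Matrix.mul_nonsing_inv _ hBu, Matrix.det_one]
      rw [hz, mul_zero] at h8
      exact zero_ne_one h8
    have h3 : At * p.1 = p.2 * Bt := by
      rw [hAtdef, hBtdef, Matrix.sub_mul, Matrix.mul_sub, Matrix.smul_mul, Matrix.mul_smul,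
        h1, h2]
    have hX : p.1 = At⁻¹ * (p.2 * Bt) := by
      rw [← h3, ← Matrix.mul_assoc, Matrix.nonsing_inv_mul _ hAu, Matrix.one_mul]
    set P := A' * At⁻¹ with hPdef
    set Q := B' * Bt⁻¹ with hQdef
    have hPQ : P * p.2 = p.2 * Q := by
      have h4 : (A' * At⁻¹) * p.2 * Bt = p.2 * B' := by
        rw [Matrix.mul_assoc (A' * At⁻¹) p.2 Bt, Matrix.mul_assoc A' At⁻¹ (p.2 * Bt), ← hX]
        exact h2
      have h5 := congrArg (fun M => M * Bt⁻¹) h4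
      rwa [Matrix.mul_assoc ((A' * At⁻¹) * p.2) Bt Bt⁻¹, Matrix.mul_nonsing_inv _ hBu,
        Matrix.mul_one, Matrix.mul_assoc p.2 B' Bt⁻¹] at h5
    have heig : ∀ a : ℂ, P.charpoly.eval a = 0 →
        (a • (1 : Matrix (Fin n) (Fin n) ℂ) - Q).det ≠ 0 := by
      intro a ha
      rw [eval_charpoly'] at ha
      have hfact : a • (1 : Matrix (Fin m) (Fin m) ℂ) - P = (a • At - A') * At⁻¹ := by
        rw [hPdef, Matrix.sub_mul, Matrix.smul_mul, Matrix.mul_nonsing_inv _ hAu]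
      have hdetA : (a • At - A').det = 0 := by
        rw [hfact, Matrix.det_mul] at ha
        rcases mul_eq_zero.mp ha with h | h
        · exact h
        · exact absurd h hAinv
      have hcombA : a • At - A' = a • A - (a * t + 1) • A' := by
        rw [hAtdef, smul_sub, smul_smul, add_smul, one_smul, sub_sub]
      have hpair2 : ((a : ℂ), a * t + 1) ≠ ((0 : ℂ), (0 : ℂ)) := by
        intro hc
        rw [Prod.mk.injEq] at hc
        obtain ⟨h5, h6⟩ := hc
        rw [h5, zero_mul, zero_add] at h6
        exact one_ne_zero h6
      have hBside : (a • B - (a * t + 1) • B').det ≠ 0 := by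
        intro hd
        exact H a (a * t + 1) hpair2 ⟨by rw [← hcombA]; exact hdetA, hd⟩
      have hfactB : a • (1 : Matrix (Fin n) (Fin n) ℂ) - Q = (a • Bt - B') * Bt⁻¹ := by
        rw [hQdef, Matrix.sub_mul, Matrix.smul_mul, Matrix.mul_nonsing_inv _ hBu]
      have hcombB : a • Bt - B' = a • B - (a * t + 1) • B' := by
        rw [hBtdef, smul_sub, smul_smul, add_smul, one_smul, sub_sub]
      rw [hfactB, Matrix.det_mul, hcombB]
      exact mul_ne_zero hBside hBinv
    have hY : p.2 = 0 := by
      have hCH : aeval P P.charpoly = 0 := Matrix.aeval_self_charpoly P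
      have h6 : p.2 * aeval Q P.charpoly = 0 := by
        rw [← aeval_intertwine hPQ, hCH, Matrix.zero_mul]
      have h7 := det_aeval_charpoly_ne_zero P Q heig
      have hNu : IsUnit (aeval Q P.charpoly).det := isUnit_iff_ne_zero.mpr h7
      calc p.2 = p.2 * (aeval Q P.charpoly) * (aeval Q P.charpoly)⁻¹ := by
            rw [Matrix.mul_assoc, Matrix.mul_nonsing_inv _ hNu, Matrix.mul_one]
        _ = 0 := by rw [h6, Matrix.zero_mul]
    have hXz : p.1 = 0 := by rw [hX, hY, Matrix.zero_mul, Matrix.mul_zero]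
    exact Prod.ext hXz hY
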